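/- Let p > 3 be a prime, a ∈ Z_p, a ≢ 0 (mod p), with ⟨a⟩_p ≤ (p-1)/2. Then sum_{k=0}^{(p-1)/2} binom(a,k)·binom(-1-a,k) ≡ sum_{k=0}^{p-1} binom(a,k)·(-2)^k (mod p^2). -/

import Mathlib

/-- Generalized binomial coefficient for a rational `a`. -/
def qchoose (a : ℚ) (k : ℕ) : ℚ := (∏ i ∈ Finset.range k, (a - i)) / (Nat.factorial k)

/-- `x ≡ y (mod p^n)` in the ring of `p`-integral rationals. -/
def pcong (p n : ℕ) (x y : ℚ) : Prop := ∃ z : ℚ, ¬ (p ∣ z.den) ∧ x - y = (p:ℚ)^n * z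

open Finset Polynomial


lemma inner_alt (n j : ℕ) (hj : j ≤ n) :
    ∑ k ∈ range (n+1), (-1:ℤ)^k * n.choose k * k.choose j
      = if j = n then (-1)^n else 0 := by
  have h1 : ∑ k ∈ range (n+1), (-1:ℤ)^k * n.choose k * k.choose j
      = ∑ k ∈ Ico j (n+1), (-1:ℤ)^k * n.choose k * k.choose j := by
    refine (Finset.sum_subset ?_ ?_).symm
    · intro x hx
      simp only [mem_Ico, mem_range] at *
      exact hx.2
    · intro x hx hx'
      simp only [mem_Ico, mem_range, not_and, not_le, not_lt] at *
      have : x < j := by by_contra h; exact absurd (hx' (by omega)) (by omega)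
      rw [Nat.choose_eq_zero_of_lt this]
      push_cast; ring
  rw [h1, Finset.sum_Ico_eq_sum_range]
  have h2 : ∀ t ∈ range (n+1-j), (-1:ℤ)^(j+t) * n.choose (j+t) * (j+t).choose j
      = ((-1)^j * n.choose j) * ((-1)^t * (n-j).choose t) := by
    intro t ht
    simp only [mem_range] at ht
    have hkn : j + t ≤ n := by omega
    have h0 := Nat.choose_mul (n := n) (Nat.le_add_right j t)
    rw [Nat.add_sub_cancel_left] at h0
    have h0' : (n.choose (j+t) : ℤ) * (j+t).choose j = n.choose j * (n-j).choose t := by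
      exact_mod_cast congrArg (Nat.cast : ℕ → ℤ) h0
    rw [pow_add]
    linear_combination ((-1:ℤ)^j*(-1:ℤ)^t) * h0'
  rw [Finset.sum_congr rfl h2, ← Finset.mul_sum]
  have h3 : n + 1 - j = (n - j) + 1 := by omega
  rw [h3, Int.alternating_sum_range_choose]
  by_cases hjn : j = n
  · subst hjn; simp
  · have : ¬ (n - j = 0) := by omega
    simp [this, hjn]

lemma legendre_id (n : ℕ) :
    ∑ k ∈ range (n+1), (-1:ℤ)^k * n.choose k * (n+k).choose k = (-1)^n := by
  have hsymm : ∀ k, (n+k).choose k = (n+k).choose n := by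
    intro k
    rw [← Nat.choose_symm (Nat.le_add_right n k), Nat.add_sub_cancel_left]
  calc ∑ k ∈ range (n+1), (-1:ℤ)^k * n.choose k * (n+k).choose k
      = ∑ k ∈ range (n+1), ∑ ij ∈ Finset.HasAntidiagonal.antidiagonal n,
          (n.choose ij.1 : ℤ) * ((-1)^k * n.choose k * k.choose ij.2) := by
        refine Finset.sum_congr rfl fun k _ => ?_
        rw [hsymm k, Nat.add_choose_eq]
        push_cast [Finset.mul_sum]
        exact Finset.sum_congr rfl fun ij _ => by ring
    _ = ∑ ij ∈ Finset.HasAntidiagonal.antidiagonal n, (n.choose ij.1 : ℤ) *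
          ∑ k ∈ range (n+1), ((-1:ℤ)^k * n.choose k * k.choose ij.2) := by
        rw [Finset.sum_comm]
        exact Finset.sum_congr rfl fun ij _ => by rw [Finset.mul_sum]
    _ = (-1)^n := by
        rw [Finset.sum_eq_single (0, n)]
        · rw [inner_alt n n le_rfl]; simp
        · intro ij hij hne
          rw [Finset.HasAntidiagonal.mem_antidiagonal] at hij
          have hj : ij.2 ≤ n := by omega
          rw [inner_alt n ij.2 hj, if_neg, mul_zero]
          intro h; apply hne
          have h1 : ij.1 = 0 := by omega
          rw [← h, ← h1]
        · intro h
          exact absurd (by simp [Finset.HasAntidiagonal.mem_antidiagonal]) h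

lemma neg_two_sum (n : ℕ) :
    ∑ k ∈ range (n+1), (n.choose k : ℤ) * (-2)^k = (-1)^n := by
  have h := add_pow (-2 : ℤ) 1 n
  simp only [one_pow, mul_one] at h
  have h2 : ((-2:ℤ) + 1)^n = (-1)^n := by norm_num
  rw [h2] at h
  calc ∑ k ∈ range (n+1), (n.choose k : ℤ) * (-2)^k
      = ∑ x ∈ range (n+1), (-2:ℤ)^x * n.choose x := Finset.sum_congr rfl fun k _ => by ring
    _ = (-1)^n := h.symm



/-- unscaled first sum -/
def Asum (m n : ℕ) : ℤ := ∑ k ∈ range (m+1), (-1:ℤ)^k * n.choose k * (n+k).choose k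
/-- unscaled second sum -/
def Bsum (p n : ℕ) : ℤ := ∑ k ∈ range p, (n.choose k : ℤ) * (-2)^k

lemma Bsum_eq {p n : ℕ} (hn : n < p) : Bsum p n = (-1)^n := by
  rw [Bsum, ← neg_two_sum n]
  refine (Finset.sum_subset ?_ ?_).symm
  · intro x hx; simp only [mem_range] at *; omega
  · intro x _ hx'
    simp only [mem_range, not_lt] at hx'
    rw [Nat.choose_eq_zero_of_lt (by omega)]
    push_cast; ring

lemma Asum_eq_of_le {m n : ℕ} (hn : n ≤ m) : Asum m n = (-1)^n := by
  rw [Asum, ← legendre_id n]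
  refine (Finset.sum_subset ?_ ?_).symm
  · intro x hx; simp only [mem_range] at *; omega
  · intro x _ hx'
    simp only [mem_range, not_lt] at hx'
    rw [Nat.choose_eq_zero_of_lt (by omega)]
    push_cast; ring

lemma AB_eq {p n : ℕ} (m : ℕ) (hn : n ≤ m) (hp : n < p) : Asum m n = Bsum p n := by
  rw [Asum_eq_of_le hn, Bsum_eq hp]

lemma AB_dvd {p : ℕ} (hp : p.Prime) (hodd : p % 2 = 1) (n : ℕ) (hn : n < p) :
    (p:ℤ) ∣ Asum ((p-1)/2) n - Bsum p n := by
  set m := (p-1)/2 with hm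
  by_cases hnm : n ≤ m
  · rw [AB_eq m hnm hn, sub_self]; exact dvd_zero _
  push_neg at hnm
  rw [Bsum_eq hn]
  rw [← legendre_id n]
  have hsplit : ∑ k ∈ range (n+1), (-1:ℤ)^k * n.choose k * (n+k).choose k
      = Asum m n + ∑ k ∈ Ico (m+1) (n+1), (-1:ℤ)^k * n.choose k * (n+k).choose k := by
    rw [Asum, Finset.sum_range_add_sum_Ico]
    omega
  rw [hsplit]
  have : Asum m n - (Asum m n + ∑ k ∈ Ico (m+1) (n+1), (-1:ℤ)^k * n.choose k * (n+k).choose k)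
      = -∑ k ∈ Ico (m+1) (n+1), (-1:ℤ)^k * n.choose k * (n+k).choose k := by ring
  rw [this]
  refine dvd_neg.mpr (Finset.dvd_sum ?_)
  intro k hk
  simp only [mem_Ico] at hk
  have hkp : k < p := by omega
  have hdvd : p ∣ (k + n).choose k := by
    refine hp.dvd_choose_add hkp hn ?_
    have h2m : 2 * m + 1 = p := by omega
    omega
  rw [Nat.add_comm k n] at hdvd
  exact Dvd.dvd.mul_left (Int.natCast_dvd_natCast.mpr hdvd) _



lemma prod_desc (n k : ℕ) : ∏ i ∈ range k, ((n:ℤ) - i) = (n.descFactorial k : ℤ) := by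
  induction k with
  | zero => simp
  | succ k ih =>
    rw [Finset.prod_range_succ, ih, Nat.descFactorial_succ]
    by_cases h : k ≤ n
    · push_cast [h]; ring
    · have h1 : n.descFactorial k = 0 := Nat.descFactorial_eq_zero_iff_lt.mpr (by omega)
      have h2 : n - k = 0 := by omega
      rw [h1, h2]; simp

lemma prod_asc (n k : ℕ) : ∏ i ∈ range k, ((n:ℤ) + i + 1) = ((n+1).ascFactorial k : ℤ) := by
  induction k with
  | zero => simp
  | succ k ih =>
    rw [Finset.prod_range_succ, ih, Nat.ascFactorial_succ]
    push_cast; ring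

lemma prod_desc_choose (n k : ℕ) :
    ∏ i ∈ range k, ((n:ℤ) - i) = (k.factorial : ℤ) * n.choose k := by
  rw [prod_desc, Nat.descFactorial_eq_factorial_mul_choose]; push_cast; ring

lemma prod_asc_choose (n k : ℕ) :
    ∏ i ∈ range k, ((n:ℤ) + i + 1) = (k.factorial : ℤ) * (n+k).choose k := by
  rw [prod_asc, Nat.ascFactorial_eq_factorial_mul_choose]; push_cast; ring


lemma deg_prod_sub (k : ℕ) : (∏ i ∈ range k, (X - C (i:ℤ))).natDegree ≤ k := by
  refine le_trans (natDegree_prod_le _ _) ?_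
  have h : ∀ i ∈ range k, (X - C (i:ℤ)).natDegree ≤ 1 := fun i _ => natDegree_X_sub_C_le _
  simpa using Finset.sum_le_sum h

lemma deg_prod_add (k : ℕ) : (∏ i ∈ range k, (X + C ((i:ℤ)+1))).natDegree ≤ k := by
  refine le_trans (natDegree_prod_le _ _) ?_
  have h : ∀ i ∈ range k, (X + C ((i:ℤ)+1)).natDegree ≤ 1 :=
    fun i _ => le_of_eq (natDegree_X_add_C _)
  simpa using Finset.sum_le_sum h

/-- The scaled difference polynomial. -/
noncomputable def Fpoly (p : ℕ) : ℤ[X] :=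
  (∑ k ∈ range ((p-1)/2+1), C ((-1:ℤ)^k * ((((p-1).factorial/k.factorial : ℕ)):ℤ)^2)
      * (∏ i ∈ range k, (X - C (i:ℤ))) * (∏ i ∈ range k, (X + C ((i:ℤ)+1))))
  - ∑ k ∈ range p, C (((((p-1).factorial/k.factorial) * (p-1).factorial : ℕ):ℤ) * (-2)^k)
      * ∏ i ∈ range k, (X - C (i:ℤ))

lemma natDegree_Fpoly_le (p : ℕ) (hp : 1 ≤ p) : (Fpoly p).natDegree ≤ p - 1 := by
  apply le_trans (natDegree_sub_le _ _)
  rw [max_le_iff]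
  constructor
  · apply natDegree_sum_le_of_forall_le
    intro k hk
    simp only [mem_range] at hk
    apply le_trans (natDegree_mul_le)
    have h1 : (C ((-1:ℤ)^k * ((((p-1).factorial/k.factorial : ℕ)):ℤ)^2)
        * (∏ i ∈ range k, (X - C (i:ℤ)))).natDegree ≤ k := by
      apply le_trans (natDegree_mul_le)
      rw [natDegree_C]
      simpa using deg_prod_sub k
    have h2 := deg_prod_add k
    omega
  · apply natDegree_sum_le_of_forall_le
    intro k hk
    simp only [mem_range] at hk
    apply le_trans (natDegree_mul_le)
    rw [natDegree_C]
    have h2 := deg_prod_sub k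
    omega

lemma Fpoly_eval_nat (p n : ℕ) :
    (Fpoly p).eval (n:ℤ) = ((p-1).factorial:ℤ)^2 * (Asum ((p-1)/2) n - Bsum p n) := by
  have hc : ∀ k, k ≤ p - 1 →
      (((p-1).factorial / k.factorial : ℕ) : ℤ) * k.factorial = ((p-1).factorial : ℤ) := by
    intro k hk
    exact_mod_cast congrArg (Nat.cast : ℕ → ℤ)
      (Nat.div_mul_cancel (Nat.factorial_dvd_factorial hk))
  rw [Fpoly, eval_sub, mul_sub, Asum, Bsum, Finset.mul_sum, Finset.mul_sum]
  congr 1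
  · rw [eval_finset_sum]
    refine Finset.sum_congr rfl fun k hk => ?_
    simp only [mem_range] at hk
    have hk' : k ≤ p - 1 := by omega
    rw [eval_mul, eval_mul, eval_C, eval_prod, eval_prod]
    simp only [eval_sub, eval_add, eval_X, eval_C]
    rw [prod_desc_choose n k]
    have hasc : ∏ i ∈ range k, ((n:ℤ) + ((i:ℤ)+1)) = (k.factorial : ℤ) * (n+k).choose k := by
      rw [← prod_asc_choose n k]; exact Finset.prod_congr rfl fun i _ => by ring
    rw [hasc]
    have h1 := hc k hk'
    linear_combination ((-1:ℤ)^k * (n.choose k : ℤ) * (((n+k).choose k : ℤ)) *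
      ((((p-1).factorial / k.factorial : ℕ) : ℤ) * k.factorial + ((p-1).factorial:ℤ))) * h1
  · rw [eval_finset_sum]
    refine Finset.sum_congr rfl fun k hk => ?_
    simp only [mem_range] at hk
    have hk' : k ≤ p - 1 := by omega
    rw [eval_mul, eval_C, eval_prod]
    simp only [eval_sub, eval_X, eval_C]
    rw [prod_desc_choose n k]
    have h1 := hc k hk'
    rw [Nat.cast_mul]
    linear_combination (((p-1).factorial:ℤ) * (-2)^k * (n.choose k : ℤ)) * h1

lemma Fpoly_factor (p : ℕ) [Fact p.Prime] (hodd : p % 2 = 1) (n₀ : ℕ)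
    (hn₀ : n₀ ≤ (p-1)/2) :
    ∃ Q : ℤ[X], Fpoly p = C (p:ℤ) * ((X - C (n₀:ℤ)) * Q) := by
  have hp : p.Prime := Fact.out
  have hp1 : 1 ≤ p := hp.one_lt.le
  haveI : NeZero p := ⟨hp.ne_zero⟩
  have hmap : (Fpoly p).map (Int.castRingHom (ZMod p)) = 0 := by
    apply eq_zero_of_natDegree_lt_card_of_eval_eq_zero' _ Finset.univ
    · intro x _
      have hx : x = (Int.castRingHom (ZMod p)) ((x.val : ℕ) : ℤ) := by
        have : ((x.val : ℕ) : ZMod p) = x := by rw [ZMod.natCast_val, ZMod.cast_id]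
        rw [← this]; simp
      rw [hx, Polynomial.eval_map, Polynomial.eval₂_at_apply, Fpoly_eval_nat]
      have hdvd : (p:ℤ) ∣ ((p-1).factorial:ℤ)^2 * (Asum ((p-1)/2) x.val - Bsum p x.val) :=
        Dvd.dvd.mul_left (AB_dvd hp hodd x.val (ZMod.val_lt x)) _
      have : ((((p-1).factorial:ℤ)^2 * (Asum ((p-1)/2) x.val - Bsum p x.val) : ℤ) : ZMod p) = 0 :=
        (ZMod.intCast_zmod_eq_zero_iff_dvd _ _).mpr hdvd
      exact_mod_cast this
    · have h1 : ((Fpoly p).map (Int.castRingHom (ZMod p))).natDegree ≤ p - 1 :=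
        le_trans natDegree_map_le (natDegree_Fpoly_le p hp1)
      have h2 : (Finset.univ : Finset (ZMod p)).card = p := by
        rw [Finset.card_univ, ZMod.card]
      omega
  have hco : ∀ i, (p:ℤ) ∣ (Fpoly p).coeff i := by
    intro i
    have h := congrArg (fun q => Polynomial.coeff q i) hmap
    simp only [Polynomial.coeff_map, Polynomial.coeff_zero] at h
    exact (ZMod.intCast_zmod_eq_zero_iff_dvd _ _).mp (by exact_mod_cast h)
  obtain ⟨G, hG⟩ := (Polynomial.C_dvd_iff_dvd_coeff _ _).mpr hco
  have heval : (p:ℤ) * G.eval (n₀:ℤ) = 0 := by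
    have h0 : (Fpoly p).eval (n₀:ℤ) = 0 := by
      rw [Fpoly_eval_nat, AB_eq (p := p) ((p-1)/2) hn₀ (by omega), sub_self, mul_zero]
    calc (p:ℤ) * G.eval (n₀:ℤ) = (Fpoly p).eval (n₀:ℤ) := by rw [hG]; simp
      _ = 0 := h0
  have hroot : G.IsRoot (n₀:ℤ) := by
    have hpne : (p:ℤ) ≠ 0 := by exact_mod_cast hp.ne_zero
    exact Polynomial.IsRoot.def.mpr (by
      rcases mul_eq_zero.mp heval with h | h
      · exact absurd h hpne
      · exact h)
  obtain ⟨Q, hQ⟩ := (Polynomial.dvd_iff_isRoot).mpr hroot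
  exact ⟨Q, by rw [hG, hQ]⟩

lemma Fpoly_aeval_rat (p : ℕ) (a : ℚ) :
    Polynomial.aeval a (Fpoly p)
      = ((p-1).factorial:ℚ)^2 *
        ((∑ k ∈ Finset.range ((p-1)/2 + 1), qchoose a k * qchoose (-1-a) k)
          - ∑ k ∈ Finset.range p, qchoose a k * (-2:ℚ)^k) := by
  have hc : ∀ k : ℕ, k ≤ p - 1 →
      ((((p-1).factorial / k.factorial : ℕ)) : ℚ) * (k.factorial : ℚ)
        = ((p-1).factorial : ℚ) := by
    intro k hk
    exact_mod_cast congrArg (Nat.cast : ℕ → ℚ)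
      (Nat.div_mul_cancel (Nat.factorial_dvd_factorial hk))
  have hfac : ∀ k : ℕ, ((k.factorial : ℚ)) ≠ 0 :=
    fun k => Nat.cast_ne_zero.mpr k.factorial_ne_zero
  have hq1 : ∀ k, ∏ i ∈ range k, (a - (i:ℚ)) = (k.factorial : ℚ) * qchoose a k := by
    intro k; rw [qchoose, mul_div_cancel₀ _ (hfac k)]
  have hq2 : ∀ k, ∏ i ∈ range k, ((-1-a) - (i:ℚ))
      = (k.factorial : ℚ) * qchoose (-1-a) k := by
    intro k; rw [qchoose, mul_div_cancel₀ _ (hfac k)]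
  have hneg : ∀ k, ∏ i ∈ range k, (a + ((i:ℚ)+1))
      = (-1:ℚ)^k * ∏ i ∈ range k, ((-1-a) - (i:ℚ)) := by
    intro k
    have h1 : ∏ i ∈ range k, ((-1-a) - (i:ℚ))
        = ∏ i ∈ range k, ((-1:ℚ) * (a + ((i:ℚ)+1))) :=
      Finset.prod_congr rfl fun i _ => by ring
    rw [h1, Finset.prod_mul_distrib, Finset.prod_const, Finset.card_range]
    have hsq : (-1:ℚ)^k * (-1:ℚ)^k = 1 := by
      rw [← sq, ← pow_mul, mul_comm k 2, pow_mul]; norm_num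
    calc ∏ i ∈ range k, (a + ((i:ℚ)+1))
        = ((-1:ℚ)^k * (-1:ℚ)^k) * ∏ i ∈ range k, (a + ((i:ℚ)+1)) := by rw [hsq, one_mul]
      _ = (-1:ℚ)^k * ((-1:ℚ)^k * ∏ i ∈ range k, (a + ((i:ℚ)+1))) := by ring
  rw [Fpoly, map_sub, map_sum, map_sum, mul_sub, Finset.mul_sum, Finset.mul_sum]
  congr 1
  · refine Finset.sum_congr rfl fun k hk => ?_
    simp only [mem_range] at hk
    have hk' : k ≤ p - 1 := by omega
    rw [map_mul, map_mul, aeval_C, map_prod, map_prod]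
    simp only [map_sub, map_add, aeval_X, aeval_C, map_mul, map_pow, map_neg, map_one,
      map_natCast]
    rw [hq1 k, hneg k, hq2 k]
    have hsq : (-1:ℚ)^k * (-1:ℚ)^k = 1 := by
      rw [← sq, ← pow_mul, mul_comm k 2, pow_mul]; norm_num
    have hck := hc k hk'
    linear_combination (((((p-1).factorial / k.factorial : ℕ)) : ℚ)^2 * (k.factorial:ℚ)^2
        * qchoose a k * qchoose (-1-a) k) * hsq
      + (qchoose a k * qchoose (-1-a) k *
          (((((p-1).factorial / k.factorial : ℕ)) : ℚ) * (k.factorial:ℚ)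
            + ((p-1).factorial : ℚ))) * hck
  · refine Finset.sum_congr rfl fun k hk => ?_
    simp only [mem_range] at hk
    have hk' : k ≤ p - 1 := by omega
    rw [map_mul, aeval_C, map_prod]
    simp only [map_sub, aeval_X, aeval_C, map_mul, map_pow, map_neg, map_natCast,
      Nat.cast_mul, map_ofNat]
    rw [hq1 k]
    have hck := hc k hk'
    linear_combination (((p-1).factorial : ℚ) * (-2:ℚ)^k * qchoose a k) * hck


theorem thm_3_1_small (p : ℕ) [Fact p.Prime] (h3 : 3 < p)
    (a : ℚ) (ha : ¬ (p ∣ a.den)) (ha0 : (a : ZMod p) ≠ 0)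
    (hv : ((a : ZMod p)).val ≤ (p-1)/2) :
    pcong p 2
      (∑ k ∈ Finset.range ((p-1)/2 + 1), qchoose a k * qchoose (-1-a) k)
      (∑ k ∈ Finset.range p, qchoose a k * (-2:ℚ)^k) := by
  have hp : p.Prime := Fact.out
  haveI : NeZero p := ⟨hp.ne_zero⟩
  have hodd : p % 2 = 1 := Nat.odd_iff.mp (hp.odd_of_ne_two (by omega))
  set n₀ : ℕ := ((a : ZMod p)).val with hn₀def
  obtain ⟨Q, hQ⟩ := Fpoly_factor p hodd n₀ hv
  set d : ℚ := (∑ k ∈ Finset.range ((p-1)/2 + 1), qchoose a k * qchoose (-1-a) k)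
      - ∑ k ∈ Finset.range p, qchoose a k * (-2:ℚ)^k with hd
  set D : ℚ := ((p-1).factorial : ℚ) with hD
  set r : ℚ := Polynomial.aeval a Q with hr
  -- the key rational identity
  have hEQ : D^2 * d = (p:ℚ) * ((a - (n₀:ℚ)) * r) := by
    have h1 := Fpoly_aeval_rat p a
    rw [hQ] at h1
    rw [map_mul, map_mul, aeval_C, map_sub, aeval_X, aeval_C] at h1
    simp only [map_natCast] at h1
    rw [← hd, ← hD, ← hr] at h1
    rw [← h1]
  -- denominators of a
  have hden0 : (a.den : ZMod p) ≠ 0 := fun h =>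
    ha ((ZMod.natCast_eq_zero_iff _ _).mp h)
  -- p divides the numerator of a - n₀
  have hj : (p:ℤ) ∣ (a.num - (n₀:ℤ) * a.den) := by
    rw [← ZMod.intCast_zmod_eq_zero_iff_dvd]
    push_cast
    have hnum : ((a.num : ZMod p)) = (a : ZMod p) * (a.den : ZMod p) := by
      rw [Rat.cast_def, div_mul_cancel₀ _ hden0]
    have hvala : ((n₀ : ℕ) : ZMod p) = (a : ZMod p) := by
      rw [hn₀def, ZMod.natCast_val, ZMod.cast_id]
    rw [hnum, hvala]
    ring
  -- move to ℚ_[p]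
  have hanorm : ‖(a : ℚ_[p])‖ ≤ 1 := Padic.norm_rat_le_one ha
  set α : ℤ_[p] := ⟨(a : ℚ_[p]), hanorm⟩ with hα
  have hrnorm : ‖((r : ℚ) : ℚ_[p])‖ ≤ 1 := by
    have h1 : (Rat.castHom ℚ_[p]).toIntAlgHom (Polynomial.aeval a Q)
        = Polynomial.aeval ((a : ℚ_[p])) Q :=
      (Polynomial.aeval_algHom_apply _ a Q).symm
    have h2 : (PadicInt.Coe.ringHom (p := p)).toIntAlgHom (Polynomial.aeval α Q)
        = Polynomial.aeval ((α : ℚ_[p])) Q :=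
      (Polynomial.aeval_algHom_apply _ α Q).symm
    have h3 : ((r : ℚ) : ℚ_[p]) = ((Polynomial.aeval α Q : ℤ_[p]) : ℚ_[p]) := by
      rw [hr]
      calc ((Polynomial.aeval a Q : ℚ) : ℚ_[p])
          = (Rat.castHom ℚ_[p]).toIntAlgHom (Polynomial.aeval a Q) := rfl
        _ = Polynomial.aeval ((a : ℚ_[p])) Q := h1
        _ = (PadicInt.Coe.ringHom (p := p)).toIntAlgHom (Polynomial.aeval α Q) := by
              rw [h2]
        _ = ((Polynomial.aeval α Q : ℤ_[p]) : ℚ_[p]) := rfl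
    rw [h3, PadicInt.padic_norm_e_of_padicInt]
    exact PadicInt.norm_le_one _
  have hpinv_pos : (0:ℝ) < (p:ℝ)⁻¹ := by
    rw [inv_pos]; exact_mod_cast hp.pos
  have htnorm : ‖(a : ℚ_[p]) - ((n₀ : ℕ) : ℚ_[p])‖ ≤ (p:ℝ)⁻¹ := by
    have hdenQ : ((a.den : ℚ)) ≠ 0 := Nat.cast_ne_zero.mpr a.den_nz
    have h : a * (a.den:ℚ) = (a.num:ℚ) := by
      conv_lhs => lhs; rw [← Rat.num_div_den a]
      exact div_mul_cancel₀ _ hdenQ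
    obtain ⟨t, ht⟩ := hj
    have ht' : (a.num : ℚ) - (n₀:ℚ) * (a.den:ℚ) = (p:ℚ) * (t:ℚ) := by
      exact_mod_cast congrArg (fun x : ℤ => (x:ℚ)) ht
    have h2 : (a - (n₀:ℚ)) * (a.den:ℚ) = (p:ℚ) * (t:ℚ) := by
      linear_combination ht' + h
    have h3 : ((a:ℚ_[p]) - ((n₀:ℕ):ℚ_[p])) * ((a.den:ℕ) : ℚ_[p]) = (p:ℚ_[p]) * ((t:ℤ) : ℚ_[p]) := by
      have := congrArg (fun x : ℚ => (x : ℚ_[p])) h2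
      push_cast at this ⊢
      linear_combination this
    have hdennorm : ‖((a.den:ℕ) : ℚ_[p])‖ = 1 := by
      have hcast2 : ((a.den:ℕ) : ℚ_[p]) = ((a.den : ℤ) : ℚ_[p]) := by push_cast; ring
      rw [hcast2]
      refine le_antisymm (Padic.norm_int_le_one _) ?_
      by_contra hlt
      push_neg at hlt
      have := (Padic.norm_intCast_lt_one_iff (k := (a.den : ℤ))).mp hlt
      exact ha (by exact_mod_cast this)
    have hnormeq : ‖(a:ℚ_[p]) - ((n₀:ℕ):ℚ_[p])‖ * ‖((a.den:ℕ) : ℚ_[p])‖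
        = ‖(p:ℚ_[p])‖ * ‖((t:ℤ) : ℚ_[p])‖ := by
      rw [← norm_mul, ← norm_mul, h3]
    rw [hdennorm, mul_one, Padic.norm_p] at hnormeq
    rw [hnormeq]
    calc (p:ℝ)⁻¹ * ‖((t:ℤ) : ℚ_[p])‖ ≤ (p:ℝ)⁻¹ * 1 :=
          mul_le_mul_of_nonneg_left (Padic.norm_int_le_one t) (le_of_lt hpinv_pos)
      _ = (p:ℝ)⁻¹ := mul_one _
  have hDnorm : ‖((D : ℚ) : ℚ_[p])‖ = 1 := by
    have hnd : ¬ (p ∣ (p-1).factorial) := by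
      intro h
      have := (Nat.Prime.dvd_factorial hp).mp h
      omega
    have : ((D : ℚ) : ℚ_[p]) = (((p-1).factorial : ℤ) : ℚ_[p]) := by
      rw [hD]; push_cast; ring
    rw [this]
    refine le_antisymm (Padic.norm_int_le_one _) ?_
    by_contra hlt
    push_neg at hlt
    have := (Padic.norm_intCast_lt_one_iff (k := ((p-1).factorial : ℤ))).mp hlt
    exact hnd (by exact_mod_cast this)
  -- final norm bound on d
  have hdnorm : ‖((d : ℚ) : ℚ_[p])‖ ≤ ((p:ℝ)⁻¹)^2 := by
    have hcast := congrArg (fun x : ℚ => (x : ℚ_[p])) hEQ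
    push_cast at hcast
    have hlhs : ‖((D : ℚ) : ℚ_[p])^2 * ((d : ℚ) : ℚ_[p])‖ = ‖((d : ℚ) : ℚ_[p])‖ := by
      rw [norm_mul, norm_pow, hDnorm, one_pow, one_mul]
    calc ‖((d : ℚ) : ℚ_[p])‖ = ‖((D : ℚ) : ℚ_[p])^2 * ((d : ℚ) : ℚ_[p])‖ := hlhs.symm
      _ = ‖((p:ℚ_[p])) * (((a:ℚ_[p]) - ((n₀:ℕ):ℚ_[p])) * ((r:ℚ) : ℚ_[p]))‖ := by
          rw [hcast]
      _ ≤ ((p:ℝ)⁻¹)^2 := by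
          rw [norm_mul, norm_mul, Padic.norm_p]
          have h1 : ‖(a:ℚ_[p]) - ((n₀:ℕ):ℚ_[p])‖ * ‖((r:ℚ) : ℚ_[p])‖ ≤ (p:ℝ)⁻¹ * 1 :=
            mul_le_mul htnorm hrnorm (norm_nonneg _) (le_of_lt hpinv_pos)
          calc (p:ℝ)⁻¹ * (‖(a:ℚ_[p]) - ((n₀:ℕ):ℚ_[p])‖ * ‖((r:ℚ) : ℚ_[p])‖)
              ≤ (p:ℝ)⁻¹ * ((p:ℝ)⁻¹ * 1) :=
                mul_le_mul_of_nonneg_left h1 (le_of_lt hpinv_pos)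
            _ = ((p:ℝ)⁻¹)^2 := by ring
  -- construct the witness
  have hppos : ((p:ℚ)) ≠ 0 := Nat.cast_ne_zero.mpr hp.ne_zero
  refine ⟨d / (p:ℚ)^2, ?_, by field_simp; exact hd.symm⟩
  -- the denominator of d / p^2 is prime to p
  intro hdvd
  set z : ℚ := d / (p:ℚ)^2 with hz
  have hznorm : ‖((z : ℚ) : ℚ_[p])‖ ≤ 1 := by
    have : ((z : ℚ) : ℚ_[p]) = ((d : ℚ) : ℚ_[p]) / ((p:ℚ_[p]))^2 := by
      rw [hz]; push_cast; ring
    rw [this, norm_div, norm_pow, Padic.norm_p]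
    rw [div_le_one (by positivity)]
    exact hdnorm
  have hnum : ¬ ((p:ℤ) ∣ z.num) := by
    intro h
    have h1 : p ∣ z.num.natAbs := by
      rwa [← Int.dvd_natAbs, Int.natCast_dvd_natCast] at h
    have h2 : p ∣ Nat.gcd z.num.natAbs z.den := Nat.dvd_gcd h1 hdvd
    have h3 : Nat.gcd z.num.natAbs z.den = 1 := z.reduced
    rw [h3] at h2
    have := Nat.le_of_dvd one_pos h2
    omega
  have hznum : ‖((z.num : ℤ) : ℚ_[p])‖ = 1 := by
    refine le_antisymm (Padic.norm_int_le_one _) ?_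
    by_contra hlt
    push_neg at hlt
    exact hnum ((Padic.norm_intCast_lt_one_iff (k := z.num)).mp hlt)
  have hzden : ‖((z.den : ℤ) : ℚ_[p])‖ ≤ (p:ℝ)⁻¹ := by
    obtain ⟨t, ht⟩ := hdvd
    rw [ht]
    push_cast
    rw [norm_mul, Padic.norm_p]
    calc (p:ℝ)⁻¹ * ‖((t:ℕ) : ℚ_[p])‖ ≤ (p:ℝ)⁻¹ * 1 := by
          refine mul_le_mul_of_nonneg_left ?_ (le_of_lt hpinv_pos)
          exact_mod_cast Padic.norm_int_le_one (t:ℤ)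
      _ = (p:ℝ)⁻¹ := mul_one _
  have hzeq : (z : ℚ) * (z.den : ℚ) = (z.num : ℚ) := by
    have hdz : ((z.den : ℚ)) ≠ 0 := Nat.cast_ne_zero.mpr z.den_nz
    conv_lhs => lhs; rw [← Rat.num_div_den z]
    exact div_mul_cancel₀ _ hdz
  have hcast : ((z : ℚ) : ℚ_[p]) * ((z.den : ℤ) : ℚ_[p]) = ((z.num : ℤ) : ℚ_[p]) := by
    have := congrArg (fun x : ℚ => (x : ℚ_[p])) hzeq
    push_cast at this ⊢
    linear_combination this
  have : (1:ℝ) ≤ 1 * (p:ℝ)⁻¹ := by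
    calc (1:ℝ) = ‖((z.num : ℤ) : ℚ_[p])‖ := hznum.symm
      _ = ‖((z : ℚ) : ℚ_[p])‖ * ‖((z.den : ℤ) : ℚ_[p])‖ := by
          rw [← norm_mul, hcast]
      _ ≤ 1 * (p:ℝ)⁻¹ := mul_le_mul hznorm hzden (norm_nonneg _) zero_le_one
  have hplt : (p:ℝ)⁻¹ < 1 := by
    rw [inv_lt_one_iff₀]
    right
    exact_mod_cast hp.one_lt
  linarith
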